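/- In the circuit F* constructed from a type-respecting simplified clique decomposition, every path of the DAG that starts at an original gate and contains no adjacency wires consists only of child-parent wires, and every path that ends at an original gate and contains no adjacency wires consists only of parent-child wires. -/

import Mathlib

/-- A simplified clique decomposition (scd), presented as the term generating
the final labeled graph: leaves introduce single vertices with a singleton
label, binary nodes take disjoint unions, and unary nodes add a new vertex,
unite two labels, or add all edges (arcs) between two labels. -/
inductive SCD (V : Type) where
  | leaf (v : V) : SCD V
  | union (l r : SCD V) : SCD V
  | addVertex (t : SCD V) (v : V) : SCD V
  | unite (t : SCD V) (S₁ S₂ : Finset V) : SCD V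
  | addAdj (t : SCD V) (S₁ S₂ : Finset V) : SCD V

variable {V : Type} [DecidableEq V]

/-- The vertex set of the labeled graph produced by an scd. -/
def SCD.verts : SCD V → Finset V
  | .leaf v => {v}
  | .union l r => l.verts ∪ r.verts
  | .addVertex t v => t.verts ∪ {v}
  | .unite t _ _ => t.verts
  | .addAdj t _ _ => t.verts

/-- The set of labels (the partition of the vertices) of the graph produced. -/
def SCD.labels : SCD V → Finset (Finset V)
  | .leaf v => {{v}}
  | .union l r => l.labels ∪ r.labels
  | .addVertex t v => t.labels ∪ {{v}}
  | .unite t S₁ S₂ => (t.labels \ {S₁, S₂}) ∪ {S₁ ∪ S₂}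
  | .addAdj t _ _ => t.labels

/-- Well-formedness of an scd: unions are of vertex-disjoint graphs, added
vertices are new, and the unite/new-adjacency operations are applied to two
distinct existing labels. -/
def SCD.WF : SCD V → Prop
  | .leaf _ => True
  | .union l r => l.WF ∧ r.WF ∧ Disjoint l.verts r.verts
  | .addVertex t v => t.WF ∧ v ∉ t.verts
  | .unite t S₁ S₂ => t.WF ∧ S₁ ∈ t.labels ∧ S₂ ∈ t.labels ∧ S₁ ≠ S₂
  | .addAdj t S₁ S₂ => t.WF ∧ S₁ ∈ t.labels ∧ S₂ ∈ t.labels ∧ S₁ ≠ S₂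

/-- The set 𝐒(T,𝐆) of all labels appearing at any node of the decomposition. -/
def SCD.allLabels : SCD V → Finset (Finset V)
  | .leaf v => {{v}}
  | .union l r => l.allLabels ∪ r.allLabels
  | .addVertex t v => t.allLabels ∪ {{v}}
  | .unite t S₁ S₂ => t.allLabels ∪ {S₁ ∪ S₂}
  | .addAdj t _ _ => t.allLabels

/-- `T.isChild S₁ S₂`: the label `S₂` was created by uniting `S₁` with another
label somewhere in the decomposition (so `S₁` is a child of `S₂`). -/
def SCD.isChild : SCD V → Finset V → Finset V → Prop
  | .leaf _ => fun _ _ => False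
  | .union l r => fun A B => l.isChild A B ∨ r.isChild A B
  | .addVertex t _ => t.isChild
  | .unite t S₁ S₂ => fun A B => t.isChild A B ∨ ((A = S₁ ∨ A = S₂) ∧ B = S₁ ∪ S₂)
  | .addAdj t _ _ => t.isChild

/-- `T.isAdjArc S₁ S₂`: the new-adjacency operation was applied somewhere in the
decomposition, introducing all arcs from the label `S₁` to the label `S₂`. -/
def SCD.isAdjArc : SCD V → Finset V → Finset V → Prop
  | .leaf _ => fun _ _ => False
  | .union l r => fun A B => l.isAdjArc A B ∨ r.isAdjArc A B
  | .addVertex t _ => t.isAdjArc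
  | .unite t _ _ => t.isAdjArc
  | .addAdj t S₁ S₂ => fun A B => t.isAdjArc A B ∨ (A = S₁ ∧ B = S₂)

/-- The three kinds of gates associated with a label of the decomposition. -/
inductive GK where
  | oand : GK
  | oor : GK
  | inn : GK
deriving DecidableEq

/-- Gates of the circuit `F*` are pairs (label, kind); for a singleton label
the three gates coincide with the original gate, canonically represented with
kind `oand`. -/
def canon (p : Finset V × GK) : Finset V × GK :=
  if p.1.card = 1 then (p.1, GK.oand) else p

/-- An original gate of `F*`: the gate corresponding to a singleton label. -/
def OriginalGate (T : SCD V) (g : Finset V × GK) : Prop :=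
  ∃ v : V, ({v} : Finset V) ∈ T.allLabels ∧ g = ({v}, GK.oand)

/-- The three kinds of wires of `F*`. -/
inductive WKind where
  | cp : WKind   -- child-parent wire
  | pc : WKind   -- parent-child wire
  | adj : WKind  -- adjacency wire
deriving DecidableEq

/-- The wires of `F*`: child-parent wires from `oand`/`oor` of a child label to
that of its parent; parent-child wires from `in` of a parent label to `in` of a
child label; and, for each adjacency arc from `S₁` to `S₂`, an adjacency wire
from `oand(S₁)` or `oor(S₁)` (as chosen by `sel`) to `in(S₂)`. -/
def wire (T : SCD V) (sel : Finset V → Finset V → GK) :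
    WKind → Finset V × GK → Finset V × GK → Prop
  | .cp, g₁, g₂ => ∃ (S₁ S₂ : Finset V) (k : GK),
      (k = GK.oand ∨ k = GK.oor) ∧ T.isChild S₁ S₂ ∧
      g₁ = canon (S₁, k) ∧ g₂ = canon (S₂, k)
  | .pc, g₁, g₂ => ∃ S₁ S₂ : Finset V, T.isChild S₁ S₂ ∧
      g₁ = canon (S₂, GK.inn) ∧ g₂ = canon (S₁, GK.inn)
  | .adj, g₁, g₂ => ∃ S₁ S₂ : Finset V, T.isAdjArc S₁ S₂ ∧
      g₁ = canon (S₁, sel S₁ S₂) ∧ g₂ = canon (S₂, GK.inn)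

/-- A path in the DAG of `F*` from `a` to `b` whose wires have the listed kinds. -/
inductive RelChain {α : Type} (step : WKind → α → α → Prop) : α → α → List WKind → Prop
  | nil (a : α) : RelChain step a a []
  | cons {a b c : α} {w : WKind} {ws : List WKind} :
      step w a b → RelChain step b c ws → RelChain step a c (w :: ws)

lemma SCD.labels_nonempty (T : SCD V) (hWF : T.WF) :
    ∀ S ∈ T.labels, S.Nonempty := by
  induction T with
  | leaf v => intro S hS; simp [SCD.labels] at hS; subst hS; exact Finset.singleton_nonempty v
  | union l r ihl ihr =>
      intro S hS
      simp [SCD.labels] at hS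
      rcases hS with h | h
      · exact ihl hWF.1 S h
      · exact ihr hWF.2.1 S h
  | addVertex t v ih =>
      intro S hS
      simp [SCD.labels] at hS
      rcases hS.symm with h | h
      · exact ih hWF.1 S h
      · subst h; exact Finset.singleton_nonempty v
  | unite t S₁ S₂ ih =>
      intro S hS
      simp [SCD.labels] at hS
      rcases hS.symm with ⟨h, _⟩ | h
      · exact ih hWF.1 S h
      · subst h
        exact (ih hWF.1 S₁ hWF.2.1).mono Finset.subset_union_left
  | addAdj t S₁ S₂ ih =>
      intro S hS
      exact ih hWF.1 S hS

lemma SCD.child_card (T : SCD V) (hWF : T.WF) {A B : Finset V}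
    (h : T.isChild A B) : 1 < B.card := by
  induction T with
  | leaf v => exact absurd h (by simp [SCD.isChild])
  | union l r ihl ihr =>
      rcases h with h | h
      · exact ihl hWF.1 h
      · exact ihr hWF.2.1 h
  | addVertex t v ih => exact ih hWF.1 h
  | unite t S₁ S₂ ih =>
      rcases h with h | ⟨_, hB⟩
      · exact ih hWF.1 h
      · subst hB
        obtain ⟨hWFt, h1, h2, hne⟩ := hWF
        obtain ⟨x, hx⟩ := t.labels_nonempty hWFt S₁ h1
        obtain ⟨y, hy⟩ := t.labels_nonempty hWFt S₂ h2
        by_contra hle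
        push_neg at hle
        rw [Finset.card_le_one] at hle
        apply hne
        ext a
        constructor
        · intro ha
          have : a = y := hle a (by simp [ha]) y (by simp [hy])
          rwa [this]
        · intro ha
          have : a = x := hle a (by simp [ha]) x (by simp [hx])
          rwa [this]
  | addAdj t S₁ S₂ ih => exact ih hWF.1 h

lemma canon_big {S : Finset V} (h : 1 < S.card) (k : GK) :
    canon (S, k) = (S, k) := by
  simp only [canon]
  have hne : ((S, k) : Finset V × GK).1.card ≠ 1 := by
    show S.card ≠ 1; omega
  rw [if_neg hne]

lemma part1_aux (T : SCD V) (hWF : T.WF) (sel : Finset V → Finset V → GK)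
    {g₁ g₂ : Finset V × GK} {ws : List WKind}
    (hpath : RelChain (wire T sel) g₁ g₂ ws) (hnoadj : WKind.adj ∉ ws)
    (hstart : g₁.2 ≠ GK.inn) : ∀ w ∈ ws, w = WKind.cp := by
  induction hpath with
  | nil a => simp
  | @cons a b c w ws hstep hchain ih =>
      have hw : w ≠ WKind.adj := fun h => hnoadj (h ▸ List.mem_cons_self)
      have hnoadj' : WKind.adj ∉ ws := fun h => hnoadj (List.mem_cons_of_mem _ h)
      cases w with
      | adj => exact absurd rfl hw
      | pc =>
          obtain ⟨S₁, S₂, hch, h1, h2⟩ := hstep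
          rw [canon_big (T.child_card hWF hch)] at h1
          exact absurd (by rw [h1] : a.2 = GK.inn) hstart
      | cp =>
          obtain ⟨S₁, S₂, k, hk, hch, h1, h2⟩ := hstep
          rw [canon_big (T.child_card hWF hch)] at h2
          have hb : b.2 ≠ GK.inn := by
            rw [h2]; rcases hk with h | h <;> subst h <;> simp
          intro w hw'
          rcases List.mem_cons.mp hw' with h | h
          · exact h ▸ rfl
          · exact ih hnoadj' hb w h

lemma part2_aux (T : SCD V) (hWF : T.WF) (sel : Finset V → Finset V → GK)
    {g₁ g₂ : Finset V × GK} {ws : List WKind}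
    (hpath : RelChain (wire T sel) g₁ g₂ ws) (hnoadj : WKind.adj ∉ ws)
    (hend : g₂.2 = GK.inn ∨ g₂.1.card = 1) : ∀ w ∈ ws, w = WKind.pc := by
  induction hpath with
  | nil a => simp
  | @cons a b c w ws hstep hchain ih =>
      have hw : w ≠ WKind.adj := fun h => hnoadj (h ▸ List.mem_cons_self)
      have hnoadj' : WKind.adj ∉ ws := fun h => hnoadj (List.mem_cons_of_mem _ h)
      have hws : ∀ w ∈ ws, w = WKind.pc := ih hnoadj' hend
      have hb : b.2 = GK.inn ∨ b.1.card = 1 := by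
        cases hchain with
        | nil => exact hend
        | @cons _ b' _ w' ws' hstep' hchain' =>
            have : w' = WKind.pc := hws w' (List.mem_cons_self)
            subst this
            obtain ⟨S₁, S₂, hch, h1, h2⟩ := hstep'
            rw [canon_big (T.child_card hWF hch)] at h1
            left; rw [h1]
      cases w with
      | adj => exact absurd rfl hw
      | cp =>
          obtain ⟨S₁, S₂, k, hk, hch, h1, h2⟩ := hstep
          have hcard := T.child_card hWF hch
          rw [canon_big hcard] at h2
          exfalso
          rcases hb with h | h
          · rw [h2] at h; rcases hk with h' | h' <;> subst h' <;> simp at h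
          · rw [h2] at h; simp at h; omega
      | pc =>
          intro w hw'
          rcases List.mem_cons.mp hw' with h | h
          · exact h ▸ rfl
          · exact hws w h

/-- In `F*`, every path starting at an original gate and containing no
adjacency wires consists only of child-parent wires, and every path ending at
an original gate and containing no adjacency wires consists only of
parent-child wires. -/
theorem fstar_adjacency_free_paths (T : SCD V) (hWF : T.WF)
    (sel : Finset V → Finset V → GK) (hsel : ∀ A B, sel A B ≠ GK.inn)
    (g₁ g₂ : Finset V × GK) (ws : List WKind)
    (hpath : RelChain (wire T sel) g₁ g₂ ws) (hnoadj : WKind.adj ∉ ws) :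
    (OriginalGate T g₁ → ∀ w ∈ ws, w = WKind.cp) ∧
    (OriginalGate T g₂ → ∀ w ∈ ws, w = WKind.pc) := by
  constructor
  · rintro ⟨v, hv, rfl⟩
    exact part1_aux T hWF sel hpath hnoadj (by simp)
  · rintro ⟨v, hv, rfl⟩
    exact part2_aux T hWF sel hpath hnoadj (Or.inr (by simp))
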